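/- Let d ≥ 1 and let Ψ = (ψ_0, …, ψ_d) ∈ ℝ^{d+1} be phase factors. Then there exist complex polynomials P, Q such that: (1) deg P ≤ d and deg Q ≤ d−1; (2) every monomial of P has exponent congruent to d mod 2 and every monomial of Q has exponent congruent to (d−1) mod 2; (3) |P(x)|² + (1−x²)|Q(x)|² = 1 for all x ∈ [−1,1]; and (4) for all x ∈ [−1,1], U(x,Ψ) = [[P(x), i√(1−x²)·Q(x)], [i√(1−x²)·Q*(x), P*(x)]], where P*, Q* denote the polynomials obtained by complex-conjugating all coefficients of P, Q. -/

import Mathlib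

open Matrix Polynomial Complex

/-- The Pauli X matrix. -/
noncomputable def PX : Matrix (Fin 2) (Fin 2) ℂ := !![0, 1; 1, 0]

/-- The Pauli Z matrix. -/
noncomputable def PZ : Matrix (Fin 2) (Fin 2) ℂ := !![1, 0; 0, -1]

/-- The QSP unitary `U(x, Ψ) = e^{iψ₀Z} ∏_{j=1}^d e^{i arccos(x) X} e^{iψⱼ Z}`,
the product taken with `j` increasing from left to right. -/
noncomputable def qspU (d : ℕ) (Ψ : Fin (d + 1) → ℝ) (x : ℝ) : Matrix (Fin 2) (Fin 2) ℂ :=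
  NormedSpace.exp ((Complex.I * (Ψ 0 : ℂ)) • PZ) *
    ((List.finRange d).map (fun j =>
      NormedSpace.exp ((Complex.I * (Real.arccos x : ℂ)) • PX) *
      NormedSpace.exp ((Complex.I * ((Ψ j.succ : ℝ) : ℂ)) • PZ))).prod

/-- The matrix `[[P(x), i√(1-x²) Q(x)], [i√(1-x²) Q*(x), P*(x)]]`, where `P*`, `Q*` have
complex-conjugated coefficients. -/
noncomputable def qspMat (P Q : Polynomial ℂ) (x : ℝ) : Matrix (Fin 2) (Fin 2) ℂ :=
  !![P.eval (x : ℂ), Complex.I * (Real.sqrt (1 - x ^ 2) : ℂ) * Q.eval (x : ℂ);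
     Complex.I * (Real.sqrt (1 - x ^ 2) : ℂ) * (Q.map (starRingEnd ℂ)).eval (x : ℂ),
     (P.map (starRingEnd ℂ)).eval (x : ℂ)]

lemma expZ (c : ℂ) : NormedSpace.exp (c • PZ) = !![Complex.exp c, 0; 0, Complex.exp (-c)] := by
  have h : c • PZ = Matrix.diagonal ![c, -c] := by
    ext i j; fin_cases i <;> fin_cases j <;> simp [PZ, Matrix.diagonal]
  rw [h, Matrix.exp_diagonal]
  ext i j; fin_cases i <;> fin_cases j <;>
    simp [Matrix.diagonal, ← Complex.exp_eq_exp_ℂ]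

noncomputable def Km : Matrix (Fin 2) (Fin 2) ℂ := !![1,1;1,-1]

lemma Km_inv : Km⁻¹ = (2⁻¹ : ℂ) • Km := by
  apply Matrix.inv_eq_right_inv
  ext i j
  fin_cases i <;> fin_cases j <;>
    simp [Km, Matrix.mul_smul, Matrix.mul_fin_two, Matrix.one_apply] <;> norm_num

lemma Km_unit : IsUnit Km := by
  rw [Matrix.isUnit_iff_isUnit_det]
  simp [Km, Matrix.det_fin_two]
  norm_num

lemma PX_conj : PX = Km * PZ * Km⁻¹ := by
  rw [Km_inv]
  ext i j
  fin_cases i <;> fin_cases j <;>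
    simp [Km, PX, PZ, Matrix.mul_smul, Matrix.mul_fin_two] <;> norm_num

lemma expX (c : ℂ) : NormedSpace.exp (c • PX) =
    !![(Complex.exp c + Complex.exp (-c))/2, (Complex.exp c - Complex.exp (-c))/2;
       (Complex.exp c - Complex.exp (-c))/2, (Complex.exp c + Complex.exp (-c))/2] := by
  have h : c • PX = Km * (c • PZ) * Km⁻¹ := by
    rw [PX_conj, Matrix.mul_smul, Matrix.smul_mul]
  rw [h, Matrix.exp_conj Km (c • PZ) Km_unit, expZ, Km_inv]
  ext i j
  fin_cases i <;> fin_cases j <;>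
    simp [Km, Matrix.mul_smul, Matrix.mul_fin_two] <;> ring

lemma expX_arccos (x : ℝ) (hx : x ∈ Set.Icc (-1:ℝ) 1) :
    NormedSpace.exp ((Complex.I * (Real.arccos x : ℂ)) • PX) =
      !![(x:ℂ), Complex.I * ((Real.sqrt (1-x^2) : ℝ) : ℂ);
         Complex.I * ((Real.sqrt (1-x^2) : ℝ) : ℂ), (x:ℂ)] := by
  have h1 : Complex.exp (Complex.I * (Real.arccos x : ℂ))
      = (x:ℂ) + ((Real.sqrt (1-x^2) : ℝ) : ℂ) * Complex.I := by
    rw [mul_comm, Complex.exp_mul_I, ← Complex.ofReal_cos, ← Complex.ofReal_sin,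
      Real.cos_arccos hx.1 hx.2, Real.sin_arccos]
  have h2 : Complex.exp (-(Complex.I * (Real.arccos x : ℂ)))
      = (x:ℂ) - ((Real.sqrt (1-x^2) : ℝ) : ℂ) * Complex.I := by
    have : -(Complex.I * (Real.arccos x : ℂ)) = ((-Real.arccos x : ℝ) : ℂ) * Complex.I := by
      push_cast; ring
    rw [this, Complex.exp_mul_I, ← Complex.ofReal_cos, ← Complex.ofReal_sin,
      Real.cos_neg, Real.sin_neg, Real.cos_arccos hx.1 hx.2, Real.sin_arccos]
    push_cast; ring
  rw [expX, h1, h2]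
  ext i j; fin_cases i <;> fin_cases j <;> simp <;> ring

lemma qspU_zero (Ψ : Fin 1 → ℝ) (x : ℝ) :
    qspU 0 Ψ x = !![Complex.exp (Complex.I * (Ψ 0 : ℂ)), 0;
                    0, Complex.exp (-(Complex.I * (Ψ 0 : ℂ)))] := by
  simp [qspU, expZ]

lemma qspU_succ (d : ℕ) (Ψ : Fin (d+2) → ℝ) (x : ℝ) :
    qspU (d+1) Ψ x = NormedSpace.exp ((Complex.I * (Ψ 0 : ℂ)) • PZ) *
      NormedSpace.exp ((Complex.I * (Real.arccos x : ℂ)) • PX) * qspU d (Fin.tail Ψ) x := by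
  unfold qspU
  rw [List.finRange_succ, List.map_cons, List.prod_cons, List.map_map]
  simp only [Function.comp_def, Fin.tail, mul_assoc]

lemma eval_map_conj (P : Polynomial ℂ) (x : ℝ) :
    (P.map (starRingEnd ℂ)).eval ((x:ℝ):ℂ) = (starRingEnd ℂ) (P.eval ((x:ℝ):ℂ)) := by
  conv_lhs => rw [← Complex.conj_ofReal x]
  rw [Polynomial.eval_map, Polynomial.eval₂_at_apply]

lemma conj_exp_I (r : ℝ) : (starRingEnd ℂ) (Complex.exp (Complex.I * (r:ℂ)))
    = Complex.exp (-(Complex.I * (r:ℂ))) := by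
  rw [← Complex.exp_conj]; congr 1; simp [Complex.conj_ofReal]

lemma qsp_aux (d : ℕ) : ∀ Ψ : Fin (d+1) → ℝ,
    ∃ P Q : Polynomial ℂ,
      (∀ n, P.coeff n ≠ 0 → n ≤ d ∧ n % 2 = d % 2) ∧
      (∀ n, Q.coeff n ≠ 0 → n + 1 ≤ d ∧ n % 2 = (d+1) % 2) ∧
      (∀ x : ℝ, x ∈ Set.Icc (-1:ℝ) 1 →
        P.eval (x:ℂ) * (P.map (starRingEnd ℂ)).eval (x:ℂ)
          + (1 - (x:ℂ)^2) * (Q.eval (x:ℂ) * (Q.map (starRingEnd ℂ)).eval (x:ℂ)) = 1) ∧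
      (∀ x : ℝ, x ∈ Set.Icc (-1:ℝ) 1 → qspU d Ψ x = qspMat P Q x) := by
  induction d with
  | zero =>
    intro Ψ
    set e := Complex.exp (Complex.I * (Ψ 0 : ℂ)) with he
    have hee : e * (starRingEnd ℂ) e = 1 := by
      rw [he, conj_exp_I, ← Complex.exp_add]; simp
    refine ⟨C e, 0, ?_, ?_, ?_, ?_⟩
    · intro n hn
      rw [Polynomial.coeff_C] at hn
      by_cases h : n = 0
      · omega
      · simp [h] at hn
    · simp
    · intro x hx
      simp [Polynomial.map_C, hee]
    · intro x hx
      rw [qspU_zero]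
      unfold qspMat
      simp [Polynomial.map_C, he, conj_exp_I]
  | succ d ih =>
    intro Ψ
    obtain ⟨P, Q, hP, hQ, hnorm, hmat⟩ := ih (Fin.tail Ψ)
    set e := Complex.exp (Complex.I * (Ψ 0 : ℂ)) with he
    set cj := starRingEnd ℂ with hcj
    have hee : e * cj e = 1 := by
      rw [he, hcj, conj_exp_I, ← Complex.exp_add]; simp
    set Pc := P.map cj with hPc
    set Qc := Q.map cj with hQc
    have hQcoeff : ∀ n, Qc.coeff n = cj (Q.coeff n) := fun n => Polynomial.coeff_map _ _
    have hQcc : Qc.map cj = Q := by ext n; simp [hQc, Polynomial.coeff_map]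
    have hPcc : Pc.map cj = P := by ext n; simp [hPc, Polynomial.coeff_map]
    refine ⟨C e * (P * X ^ 1 + Qc * X ^ 2 - Qc), C e * (Q * X ^ 1 + Pc), ?_, ?_, ?_, ?_⟩
    · intro n hn
      rw [Polynomial.coeff_C_mul] at hn
      have hn' : (P * X ^ 1 + Qc * X ^ 2 - Qc).coeff n ≠ 0 := by
        intro h; rw [h, mul_zero] at hn; exact hn rfl
      rw [Polynomial.coeff_sub, Polynomial.coeff_add, Polynomial.coeff_mul_X_pow',
        Polynomial.coeff_mul_X_pow'] at hn'
      have key : (1 ≤ n ∧ P.coeff (n-1) ≠ 0) ∨ (2 ≤ n ∧ Q.coeff (n-2) ≠ 0) ∨ Q.coeff n ≠ 0 := by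
        by_contra hc
        push_neg at hc
        obtain ⟨h1, h2, h3⟩ := hc
        apply hn'
        rw [hQcoeff, hQcoeff, h3, map_zero]
        have e1 : (if 1 ≤ n then P.coeff (n-1) else 0) = 0 := by
          split_ifs with h; exacts [h1 h, rfl]
        have e2 : (if 2 ≤ n then cj (Q.coeff (n-2)) else 0) = 0 := by
          split_ifs with h; exacts [by rw [h2 h, map_zero], rfl]
        rw [e1, e2]; ring
      rcases key with ⟨h1, h2⟩ | ⟨h1, h2⟩ | h2
      · have := hP _ h2; omega
      · have := hQ _ h2; omega
      · have := hQ _ h2; omega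
    · intro n hn
      rw [Polynomial.coeff_C_mul] at hn
      have hn' : (Q * X ^ 1 + Pc).coeff n ≠ 0 := by
        intro h; rw [h, mul_zero] at hn; exact hn rfl
      rw [Polynomial.coeff_add, Polynomial.coeff_mul_X_pow'] at hn'
      have key : (1 ≤ n ∧ Q.coeff (n-1) ≠ 0) ∨ P.coeff n ≠ 0 := by
        by_contra hc
        push_neg at hc
        obtain ⟨h1, h2⟩ := hc
        apply hn'
        rw [hPc, Polynomial.coeff_map, h2, map_zero]
        have e1 : (if 1 ≤ n then Q.coeff (n-1) else 0) = 0 := by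
          split_ifs with h; exacts [h1 h, rfl]
        rw [e1]; ring
      rcases key with ⟨h1, h2⟩ | h2
      · have := hQ _ h2; omega
      · have := hP _ h2; omega
    · intro x hx
      have hn := hnorm x hx
      have hmapP' : (C e * (P * X ^ 1 + Qc * X ^ 2 - Qc)).map cj
          = C (cj e) * (Pc * X ^ 1 + Q * X ^ 2 - Q) := by
        simp [Polynomial.map_mul, Polynomial.map_add, Polynomial.map_sub,
          Polynomial.map_pow, Polynomial.map_C, Polynomial.map_X, hQcc, hPc]
      have hmapQ' : (C e * (Q * X ^ 1 + Pc)).map cj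
          = C (cj e) * (Qc * X ^ 1 + P) := by
        simp [Polynomial.map_mul, Polynomial.map_add, Polynomial.map_pow,
          Polynomial.map_C, Polynomial.map_X, hPcc, hQc]
      rw [hmapP', hmapQ']
      simp only [eval_mul, eval_add, eval_sub, eval_pow, eval_X, eval_C]
      calc (e * (P.eval (x:ℂ) * (x:ℂ)^1 + Qc.eval (x:ℂ) * (x:ℂ)^2 - Qc.eval (x:ℂ))) *
            (cj e * (Pc.eval (x:ℂ) * (x:ℂ)^1 + Q.eval (x:ℂ) * (x:ℂ)^2 - Q.eval (x:ℂ)))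
          + (1 - (x:ℂ)^2) * ((e * (Q.eval (x:ℂ) * (x:ℂ)^1 + Pc.eval (x:ℂ))) *
            (cj e * (Qc.eval (x:ℂ) * (x:ℂ)^1 + P.eval (x:ℂ))))
            = (e * cj e) * (P.eval (x:ℂ) * Pc.eval (x:ℂ)
              + (1 - (x:ℂ)^2) * (Q.eval (x:ℂ) * Qc.eval (x:ℂ))) := by ring
        _ = 1 := by rw [hee, hn, one_mul]
    · intro x hx
      have hmapP' : (C e * (P * X ^ 1 + Qc * X ^ 2 - Qc)).map cj
          = C (cj e) * (Pc * X ^ 1 + Q * X ^ 2 - Q) := by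
        simp [Polynomial.map_mul, Polynomial.map_add, Polynomial.map_sub,
          Polynomial.map_pow, Polynomial.map_C, Polynomial.map_X, hQcc, hPc]
      have hmapQ' : (C e * (Q * X ^ 1 + Pc)).map cj
          = C (cj e) * (Qc * X ^ 1 + P) := by
        simp [Polynomial.map_mul, Polynomial.map_add, Polynomial.map_pow,
          Polynomial.map_C, Polynomial.map_X, hPcc, hQc]
      rw [qspU_succ, hmat x hx, expZ, expX_arccos x hx]
      set s := ((Real.sqrt (1 - x^2) : ℝ) : ℂ) with hsdef
      have hs2 : (1 : ℝ) - x^2 ≥ 0 := by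
        obtain ⟨h1, h2⟩ := hx; nlinarith
      have hst : (Complex.I * s) * (Complex.I * s) = (x:ℂ)^2 - 1 := by
        rw [hsdef, mul_mul_mul_comm, Complex.I_mul_I, ← Complex.ofReal_mul,
          Real.mul_self_sqrt hs2]
        push_cast
        ring
      have hcje : cj e = Complex.exp (-(Complex.I * (Ψ 0 : ℂ))) := conj_exp_I _
      unfold qspMat
      rw [hmapP', hmapQ']
      ext i j
      fin_cases i <;> fin_cases j <;>
        simp [Matrix.mul_apply, Fin.sum_univ_two,
          eval_mul, eval_add, eval_sub, eval_pow, eval_X, eval_C, hcje] <;>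
        try ring
      · linear_combination (Complex.exp (Complex.I * (Ψ 0 : ℂ)) * Polynomial.eval ((x:ℝ):ℂ) (Q.map (starRingEnd ℂ))) * hst
      · linear_combination (Complex.exp (-(Complex.I * (Ψ 0 : ℂ))) * Polynomial.eval ((x:ℝ):ℂ) Q) * hst

theorem qsp_exists_polynomials (d : ℕ) (hd : 1 ≤ d) (Ψ : Fin (d + 1) → ℝ) :
    ∃ P Q : Polynomial ℂ,
      P.natDegree ≤ d ∧
      Q.natDegree ≤ d - 1 ∧
      (∀ n : ℕ, P.coeff n ≠ 0 → n % 2 = d % 2) ∧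
      (∀ n : ℕ, Q.coeff n ≠ 0 → n % 2 = (d - 1) % 2) ∧
      (∀ x : ℝ, x ∈ Set.Icc (-1 : ℝ) 1 →
        ‖P.eval (x : ℂ)‖ ^ 2
          + (1 - x ^ 2) * ‖Q.eval (x : ℂ)‖ ^ 2 = 1) ∧
      (∀ x : ℝ, x ∈ Set.Icc (-1 : ℝ) 1 → qspU d Ψ x = qspMat P Q x) := by
  obtain ⟨P, Q, hP, hQ, hnorm, hmat⟩ := qsp_aux d Ψ
  refine ⟨P, Q, ?_, ?_, ?_, ?_, ?_, hmat⟩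
  · rw [Polynomial.natDegree_le_iff_coeff_eq_zero]
    intro N hN; by_contra h; have := hP N h; omega
  · rw [Polynomial.natDegree_le_iff_coeff_eq_zero]
    intro N hN; by_contra h; have := hQ N h; omega
  · intro n hn; have := hP n hn; omega
  · intro n hn; have := hQ n hn; omega
  · intro x hx
    have h := hnorm x hx
    have e2 : ∀ z : ℂ, ((‖z‖ : ℝ) : ℂ)^2 = z * (starRingEnd ℂ) z := fun z => by
      rw [Complex.mul_conj, ← Complex.sq_norm]; push_cast; ring
    rw [← Complex.ofReal_inj]
    push_cast
    rw [e2, e2, ← eval_map_conj P x, ← eval_map_conj Q x]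
    linear_combination h
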